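/- Let (N,v) be a TU-game and x a pre-imputation. If x is the pre-nucleolus (i.e., θ(x) ≤_L θ(z) for all pre-imputations z) and the pre-nucleolus point is unique, then x has Property I: for every ψ ∈ ℝ with D(ψ,x) ≠ ∅, every y ∈ ℝ^N with y(N) = 0 and y(S) ≥ 0 for all S ∈ D(ψ,x) satisfies y(S) = 0 for all S ∈ D(ψ,x). -/

import Mathlib

open Finset

noncomputable def excess {α : Type*} (v : Finset α → ℝ) (x : α → ℝ) (S : Finset α) : ℝ :=
  v S - ∑ k ∈ S, x k

noncomputable def Dset {α : Type*} [Fintype α] [DecidableEq α]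
    (v : Finset α → ℝ) (x : α → ℝ) (ψ : ℝ) : Finset (Finset α) :=
  (Finset.univ.powerset.erase (∅ : Finset α)).filter (fun S => ψ ≤ excess v x S)

def indVec {α : Type*} [DecidableEq α] (S : Finset α) : α → ℝ := fun k => if k ∈ S then 1 else 0

def IsBalanced {α : Type*} [Fintype α] [DecidableEq α] (B : Finset (Finset α)) : Prop :=
  ∃ w : Finset α → ℝ, (∀ S ∈ B, 0 < w S) ∧ (∑ S ∈ B, w S • indVec S) = fun _ => (1:ℝ)

noncomputable def theta {α : Type*} [Fintype α] [DecidableEq α]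
    (v : Finset α → ℝ) (x : α → ℝ) : List ℝ :=
  List.insertionSort (· ≥ ·) (((Finset.univ.powerset.erase (∅ : Finset α)).toList).map (excess v x))

def lexLe (l₁ l₂ : List ℝ) : Prop := l₁ = l₂ ∨ List.Lex (· < ·) l₁ l₂


namespace Stmt6Aux
open List

lemma forall2_insert_right : ∀ {p q : List ℝ}, List.Forall₂ (· ≤ ·) p q →
    ∀ {x b : ℝ}, x ≤ b → List.Pairwise (· ≥ ·) (x :: p) →
      List.Forall₂ (· ≤ ·) (x :: p) (List.orderedInsert (· ≥ ·) b q) := by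
  intro p q h
  induction h with
  | nil => intro x b hxb _; simpa using List.Forall₂.cons hxb List.Forall₂.nil
  | @cons x' y' p'' q'' hxy h'' ih =>
    intro x b hxb hs
    by_cases hby : b ≥ y'
    · simp only [List.orderedInsert, if_pos hby]
      exact List.Forall₂.cons hxb (List.Forall₂.cons hxy h'')
    · simp only [List.orderedInsert, if_neg hby]
      push_neg at hby
      refine List.Forall₂.cons (le_of_lt (lt_of_le_of_lt hxb hby)) ?_
      have hx'b : x' ≤ b := le_trans (List.rel_of_pairwise_cons hs (List.mem_cons_self)) hxb
      exact ih hx'b (List.Pairwise.of_cons hs)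

lemma forall2_insert_left : ∀ {p q : List ℝ}, List.Forall₂ (· ≤ ·) p q →
    ∀ {a y : ℝ}, a ≤ y → List.Pairwise (· ≥ ·) (y :: q) →
      List.Forall₂ (· ≤ ·) (List.orderedInsert (· ≥ ·) a p) (y :: q) := by
  intro p q h
  induction h with
  | nil => intro a y hay _; simpa using List.Forall₂.cons hay List.Forall₂.nil
  | @cons x' y' p'' q'' hxy h'' ih =>
    intro a y hay hs
    by_cases hax : a ≥ x'
    · simp only [List.orderedInsert, if_pos hax]
      exact List.Forall₂.cons hay (List.Forall₂.cons hxy h'')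
    · simp only [List.orderedInsert, if_neg hax]
      push_neg at hax
      refine List.Forall₂.cons (le_trans hxy (List.rel_of_pairwise_cons hs (List.mem_cons_self))) ?_
      have hay' : a ≤ y' := le_trans (le_of_lt hax) hxy
      exact ih hay' (List.Pairwise.of_cons hs)

lemma forall2_insert : ∀ {p q : List ℝ}, List.Forall₂ (· ≤ ·) p q →
    ∀ {a b : ℝ}, a ≤ b → List.Pairwise (· ≥ ·) p → List.Pairwise (· ≥ ·) q →
      List.Forall₂ (· ≤ ·) (List.orderedInsert (· ≥ ·) a p) (List.orderedInsert (· ≥ ·) b q) := by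
  intro p q h
  induction h with
  | nil => intro a b hab _ _; simpa using List.Forall₂.cons hab List.Forall₂.nil
  | @cons x y p' q' hxy h' ih =>
    intro a b hab hsp hsq
    by_cases hax : a ≥ x <;> by_cases hby : b ≥ y
    · simp only [List.orderedInsert, if_pos hax, if_pos hby]
      exact List.Forall₂.cons hab (List.Forall₂.cons hxy h')
    · simp only [List.orderedInsert, if_pos hax, if_neg hby]
      push_neg at hby
      refine List.Forall₂.cons (le_of_lt (lt_of_le_of_lt hab hby)) ?_
      exact forall2_insert_right h' (le_trans hax hab) hsp
    · simp only [List.orderedInsert, if_neg hax, if_pos hby]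
      push_neg at hax
      refine List.Forall₂.cons (le_trans hxy hby) ?_
      exact forall2_insert_left h' (le_trans (le_of_lt hax) hxy) hsq
    · simp only [List.orderedInsert, if_neg hax, if_neg hby]
      exact List.Forall₂.cons hxy (ih hab (List.Pairwise.of_cons hsp) (List.Pairwise.of_cons hsq))

lemma sort_mono : ∀ {l m : List ℝ}, List.Forall₂ (· ≤ ·) l m →
    List.Forall₂ (· ≤ ·) (List.insertionSort (· ≥ ·) l) (List.insertionSort (· ≥ ·) m) := by
  intro l m h
  induction h with
  | nil => exact List.Forall₂.nil
  | @cons a b l' m' hab h' ih =>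
    exact forall2_insert ih hab (List.pairwise_insertionSort _ _) (List.pairwise_insertionSort _ _)

lemma lex_of_prefix : ∀ {p q : List ℝ}, List.Forall₂ (· ≤ ·) p q → p ≠ q →
    ∀ (s t : List ℝ), List.Lex (· < ·) (p ++ s) (q ++ t) := by
  intro p q h
  induction h with
  | nil => intro hne _ _; exact absurd rfl hne
  | @cons a b p' q' hab h' ih =>
    intro hne s t
    rcases lt_or_eq_of_le hab with hlt | heq
    · exact List.Lex.rel hlt
    · subst heq
      have : p' ≠ q' := fun hpq => hne (by rw [hpq])
      exact List.Lex.cons (ih this s t)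

lemma sum_map_pos {β : Type*} : ∀ (l : List β) (h : β → ℝ), (∀ a ∈ l, 0 ≤ h a) →
    ∀ a₀ ∈ l, 0 < h a₀ → 0 < (l.map h).sum := by
  intro l h hnn a₀ ha₀ hpos
  induction l with
  | nil => simp at ha₀
  | cons c l' ih =>
    simp only [List.map_cons, List.sum_cons]
    rcases List.mem_cons.1 ha₀ with rfl | hmem
    · have : 0 ≤ (l'.map h).sum := List.sum_nonneg (by
        intro r hr
        obtain ⟨a, ha, rfl⟩ := List.mem_map.1 hr
        exact hnn a (List.mem_cons_of_mem _ ha))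
      linarith
    · have := ih (fun a ha => hnn a (List.mem_cons_of_mem _ ha)) hmem
      have hc : 0 ≤ h c := hnn c (List.mem_cons_self)
      linarith

lemma sum_map_sub {β : Type*} : ∀ (l : List β) (f g : β → ℝ),
    (l.map f).sum - (l.map g).sum = (l.map (fun a => f a - g a)).sum := by
  intro l f g
  induction l with
  | nil => simp
  | cons c l' ih => simp only [List.map_cons, List.sum_cons]; linarith

lemma forall2_map {β : Type*} : ∀ {l : List β} {f g : β → ℝ}, (∀ a ∈ l, g a ≤ f a) →
    List.Forall₂ (· ≤ ·) (l.map g) (l.map f) := by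
  intro l f g h
  induction l with
  | nil => exact List.Forall₂.nil
  | cons c l' ih =>
    exact List.Forall₂.cons (h c (List.mem_cons_self))
      (ih fun a ha => h a (List.mem_cons_of_mem _ ha))

end Stmt6Aux

namespace Stmt6Aux
open List

lemma sort_split {β : Type*} (L : List β) (p : β → Bool) (E : β → ℝ)
    (h : ∀ S ∈ L, ∀ T ∈ L, p S = false → p T = true → E S ≤ E T) :
    List.insertionSort (· ≥ ·) (L.map E) =
      List.insertionSort (· ≥ ·) ((L.filter p).map E) ++
      List.insertionSort (· ≥ ·) ((L.filter (fun S => !p S)).map E) := by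
  refine (fun hp h1 h2 => List.Perm.eq_of_pairwise' (r := (· ≥ ·)) h1 h2 hp) ?_ ?_ ?_
  · calc List.insertionSort (· ≥ ·) (L.map E) ~ L.map E := List.perm_insertionSort _ _
      _ ~ (L.filter p ++ L.filter (fun S => !p S)).map E :=
          (List.Perm.map E (List.filter_append_perm p L)).symm
      _ = (L.filter p).map E ++ (L.filter (fun S => !p S)).map E := List.map_append
      _ ~ _ := List.Perm.append (List.perm_insertionSort _ _).symm
            (List.perm_insertionSort _ _).symm
  · exact List.pairwise_insertionSort _ _
  · rw [List.pairwise_append]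
    refine ⟨List.pairwise_insertionSort _ _, List.pairwise_insertionSort _ _, ?_⟩
    intro a ha b hb
    rw [List.mem_insertionSort, List.mem_map] at ha hb
    obtain ⟨T, hT, rfl⟩ := ha
    obtain ⟨S, hS, rfl⟩ := hb
    rw [List.mem_filter] at hT hS
    exact h S hS.1 T hT.1 (by simpa using hS.2) hT.2

end Stmt6Aux

/-- if `x` is the (unique) pre-nucleolus then `x` has Property I. -/
theorem stmt6 {α : Type*} [Fintype α] [DecidableEq α] [Nonempty α]
    (v : Finset α → ℝ) (hv : v ∅ = 0)
    (x : α → ℝ) (hx : ∑ k, x k = v Finset.univ)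
    (hmin : ∀ z : α → ℝ, ∑ k, z k = v Finset.univ → lexLe (theta v x) (theta v z))
    (huniq : ∀ z : α → ℝ, ∑ k, z k = v Finset.univ →
      (∀ w : α → ℝ, ∑ k, w k = v Finset.univ → lexLe (theta v z) (theta v w)) → z = x) :
    ∀ ψ : ℝ, (Dset v x ψ).Nonempty →
      ∀ y : α → ℝ, ∑ k, y k = 0 → (∀ S ∈ Dset v x ψ, 0 ≤ ∑ k ∈ S, y k) →
        ∀ S ∈ Dset v x ψ, ∑ k ∈ S, y k = 0 := by
  intro ψ hDne y hy0 hyD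
  by_contra hcon
  push_neg at hcon
  obtain ⟨S₀, hS₀D, hS₀ne⟩ := hcon
  have hS₀pos : 0 < ∑ k ∈ S₀, y k := lt_of_le_of_ne (hyD S₀ hS₀D) (Ne.symm hS₀ne)
  classical
  set C := (Finset.univ.powerset.erase (∅ : Finset α)) with hCdef
  have hDC : Dset v x ψ ⊆ C := Finset.filter_subset _ _
  have hCne : C.Nonempty := hDne.mono hDC
  have hmemD : ∀ S, S ∈ Dset v x ψ ↔ S ∈ C ∧ ψ ≤ excess v x S := by
    intro S; simp [Dset, Finset.mem_filter, hCdef]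
  -- bound on y-sums
  set M := C.sup' hCne (fun S => |∑ k ∈ S, y k|) with hMdef
  have hMb : ∀ S ∈ C, |∑ k ∈ S, y k| ≤ M := fun S hS => Finset.le_sup' (fun S => |∑ k ∈ S, y k|) hS
  have hM0 : 0 ≤ M := le_trans (abs_nonneg _) (hMb _ hCne.choose_spec)
  -- gap δ
  set rest := C.filter (fun S => S ∉ Dset v x ψ) with hrestdef
  set δ := if h : rest.Nonempty then rest.inf' h (fun S => ψ - excess v x S) else 1 with hδdef
  have hδpos : 0 < δ := by
    rw [hδdef]
    split
    · next h =>
      rw [Finset.lt_inf'_iff]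
      intro S hS
      rw [hrestdef, Finset.mem_filter] at hS
      have : ¬ ψ ≤ excess v x S := fun hc => hS.2 ((hmemD S).2 ⟨hS.1, hc⟩)
      linarith [not_le.1 this]
    · norm_num
  have hδle : ∀ S ∈ C, S ∉ Dset v x ψ → excess v x S ≤ ψ - δ := by
    intro S hSC hSD
    have hSrest : S ∈ rest := by rw [hrestdef, Finset.mem_filter]; exact ⟨hSC, hSD⟩
    have hne : rest.Nonempty := ⟨S, hSrest⟩
    rw [hδdef, dif_pos hne]
    have := Finset.inf'_le (fun S => ψ - excess v x S) hSrest
    linarith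
  set ε := δ / (2*M + 2) with hεdef
  have hεpos : 0 < ε := div_pos hδpos (by linarith)
  have hεM : ε * (2*M + 2) = δ := by rw [hεdef]; field_simp
  set z := fun k => x k + ε * y k with hzdef
  have hzsum : ∑ k, z k = v Finset.univ := by
    rw [hzdef]
    simp only [Finset.sum_add_distrib, ← Finset.mul_sum, hy0, hx, mul_zero, add_zero]
  have hEz : ∀ S, excess v z S = excess v x S - ε * ∑ k ∈ S, y k := by
    intro S
    simp only [excess, hzdef, Finset.sum_add_distrib, ← Finset.mul_sum]
    ring
  -- key cross inequality for z
  have hkey : ∀ S ∈ C, S ∉ Dset v x ψ → ∀ T ∈ C, T ∈ Dset v x ψ →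
      excess v z S ≤ excess v z T := by
    intro S hSC hSD T hTC hTD
    have h1 : excess v x S ≤ ψ - δ := hδle S hSC hSD
    have h2 : ψ ≤ excess v x T := ((hmemD T).1 hTD).2
    have h3 := abs_le.1 (hMb S hSC)
    have h4 := abs_le.1 (hMb T hTC)
    rw [hEz, hEz]
    nlinarith [h3.1, h3.2, h4.1, h4.2, hεpos.le]
  -- lists
  set L := C.toList with hLdef
  set p : Finset α → Bool := fun S => decide (S ∈ Dset v x ψ) with hpdef
  have hthx : theta v x =
      List.insertionSort (· ≥ ·) ((L.filter p).map (excess v x)) ++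
      List.insertionSort (· ≥ ·) ((L.filter (fun S => !p S)).map (excess v x)) := by
    rw [theta]
    apply Stmt6Aux.sort_split
    intro S hS T hT hpS hpT
    rw [hpdef] at hpS hpT
    simp only [decide_eq_false_iff_not] at hpS
    simp only [decide_eq_true_eq] at hpT
    have hSC : S ∈ C := by rwa [← Finset.mem_toList, ← hLdef]
    have h1 : excess v x S ≤ ψ - δ := hδle S hSC hpS
    have h2 : ψ ≤ excess v x T := ((hmemD T).1 hpT).2
    linarith
  have hthz : theta v z =
      List.insertionSort (· ≥ ·) ((L.filter p).map (excess v z)) ++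
      List.insertionSort (· ≥ ·) ((L.filter (fun S => !p S)).map (excess v z)) := by
    rw [theta]
    apply Stmt6Aux.sort_split
    intro S hS T hT hpS hpT
    rw [hpdef] at hpS hpT
    simp only [decide_eq_false_iff_not] at hpS
    simp only [decide_eq_true_eq] at hpT
    have hSC : S ∈ C := by rwa [← Finset.mem_toList, ← hLdef]
    have hTC : T ∈ C := by rwa [← Finset.mem_toList, ← hLdef]
    exact hkey S hSC hpS T hTC hpT
  have hmemFin : ∀ S, S ∈ L.filter p → S ∈ Dset v x ψ := by
    intro S hS
    rw [List.mem_filter, hpdef] at hS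
    simpa using hS.2
  -- prefix comparison
  have hf2 : List.Forall₂ (· ≤ ·)
      (((L.filter p).map (excess v z))) (((L.filter p).map (excess v x))) := by
    apply Stmt6Aux.forall2_map
    intro S hS
    have hyS : 0 ≤ ∑ k ∈ S, y k := hyD S (hmemFin S hS)
    rw [hEz]
    nlinarith [hεpos.le]
  have hf2s := Stmt6Aux.sort_mono hf2
  -- prefixes are different
  have hS₀L : S₀ ∈ L.filter p := by
    rw [List.mem_filter, hpdef]
    constructor
    · rw [hLdef, Finset.mem_toList]; exact hDC hS₀D
    · simpa using hS₀D
  have hsumpos : 0 < ((L.filter p).map (fun S => ε * ∑ k ∈ S, y k)).sum := by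
    exact Stmt6Aux.sum_map_pos _ _
      (fun S hS => mul_nonneg hεpos.le (hyD S (hmemFin S hS))) S₀ hS₀L
      (mul_pos hεpos hS₀pos)
  have hne : List.insertionSort (· ≥ ·) ((L.filter p).map (excess v z)) ≠
      List.insertionSort (· ≥ ·) ((L.filter p).map (excess v x)) := by
    intro heq
    have h1 : (((L.filter p).map (excess v x))).sum = (((L.filter p).map (excess v z))).sum := by
      rw [← (List.perm_insertionSort (· ≥ ·) _).sum_eq, ← heq,
        (List.perm_insertionSort (· ≥ ·) _).sum_eq]
    have h2 := Stmt6Aux.sum_map_sub (L.filter p) (excess v x) (excess v z)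
    rw [h1, sub_self] at h2
    have h3 : ((L.filter p).map (fun S => excess v x S - excess v z S)) =
        ((L.filter p).map (fun S => ε * ∑ k ∈ S, y k)) := by
      apply List.map_congr_left
      intro S _
      rw [hEz]; ring
    rw [h3] at h2
    linarith
  have hlex : List.Lex (· < ·) (theta v z) (theta v x) := by
    rw [hthz, hthx]
    exact Stmt6Aux.lex_of_prefix hf2s hne _ _
  rcases hmin z hzsum with heq | hlt
  · rw [heq] at hlex
    exact _root_.asymm hlex hlex
  · exact _root_.asymm hlex hlt
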